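/- arXiv:2103.01150 — 3 statements merged into one kernel-verified Lean document; each statement's English description precedes it below -/
import Mathlib

section
/- Let A be an n×n complex matrix with constant row sum c ∈ ℂ (every row sums to c). If |c| = ‖A‖₂, then every column of A also sums to c; that is, A is a c-generalized doubly stochastic matrix. -/
/-- The spectral norm (largest singular value / operator 2-norm) of a complex matrix. -/
noncomputable def specNorm {n : ℕ} (A : Matrix (Fin n) (Fin n) ℂ) : ℝ :=
  ‖Matrix.toEuclideanCLM (𝕜 := ℂ) A‖

/-- The spectral radius of a complex matrix. -/
noncomputable def specRad {n : ℕ} (A : Matrix (Fin n) (Fin n) ℂ) : ℝ :=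
  sSup ((fun z : ℂ => ‖z‖) '' spectrum ℂ A)

open Matrix in
set_option maxHeartbeats 1000000 in
theorem col_sum_eq_of_abs_row_sum_eq_specNorm {n : ℕ} (hn : 0 < n)
    (A : Matrix (Fin n) (Fin n) ℂ) (c : ℂ)
    (hrow : ∀ i, ∑ j, A i j = c) (hc : ‖c‖ = specNorm A) :
    ∀ j, ∑ i, A i j = c := by
  intro j0
  classical
  set T := Matrix.toEuclideanCLM (𝕜 := ℂ) Aᴴ with hT
  set e : EuclideanSpace ℂ (Fin n) := (WithLp.equiv 2 (Fin n → ℂ)).symm (fun _ => 1) with he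
  set w : EuclideanSpace ℂ (Fin n) := T e with hw
  have hwap : ∀ i, w i = starRingEnd ℂ (∑ k, A k i) := by
    intro i
    simp [hw, hT, he, Matrix.toLin'_apply, Matrix.mulVec, dotProduct,
      Matrix.conjTranspose_apply, map_sum]
  have hnormT : ‖T‖ = ‖c‖ := by
    rw [hT, ← Matrix.star_eq_conjTranspose, map_star,
      ContinuousLinearMap.star_eq_adjoint, ContinuousLinearMap.adjoint.norm_map]
    exact hc.symm
  have hinner : (inner ℂ e w : ℂ) = (n : ℂ) * starRingEnd ℂ c := by
    rw [PiLp.inner_apply]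
    have : ∀ i, (inner ℂ (e i) (w i) : ℂ) = starRingEnd ℂ (∑ k, A k i) := by
      intro i; simp [RCLike.inner_apply, he, hwap i]
    rw [Finset.sum_congr rfl fun i _ => this i, ← map_sum, Finset.sum_comm]
    simp [hrow, Finset.card_univ, mul_comm]
  have hee : ‖e‖ ^ 2 = (n : ℝ) := by
    rw [EuclideanSpace.norm_eq]
    rw [Real.sq_sqrt (by positivity)]
    simp [he]
  set u : EuclideanSpace ℂ (Fin n) := w - (starRingEnd ℂ c) • e with hu
  have heu : (inner ℂ e u : ℂ) = 0 := by
    rw [hu, inner_sub_right, inner_smul_right, hinner, inner_self_eq_norm_sq_to_K]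
    norm_cast
    rw [hee]
    push_cast
    ring
  have hortho : (inner ℂ ((starRingEnd ℂ c) • e) u : ℂ) = 0 := by
    rw [inner_smul_left, heu, mul_zero]
  have hwsplit : w = (starRingEnd ℂ c) • e + u := by rw [hu]; abel
  have hnormw : ‖w‖ ^ 2 = ‖c‖ ^ 2 * n + ‖u‖ ^ 2 := by
    rw [hwsplit, @norm_add_sq ℂ _ _ _ _ ((starRingEnd ℂ c) • e) u, hortho]
    simp [norm_smul, mul_pow, hee, Complex.norm_conj]
  have hwle : ‖w‖ ^ 2 ≤ ‖c‖ ^ 2 * n := by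
    have h1 : ‖w‖ ≤ ‖T‖ * ‖e‖ := T.le_opNorm e
    have h2 : ‖w‖ ^ 2 ≤ (‖T‖ * ‖e‖) ^ 2 := by
      apply pow_le_pow_left₀ (norm_nonneg _) h1
    calc ‖w‖ ^ 2 ≤ (‖T‖ * ‖e‖) ^ 2 := h2
      _ = ‖c‖ ^ 2 * n := by rw [hnormT, mul_pow, hee]
  have hu0 : u = 0 := by
    have : ‖u‖ ^ 2 ≤ 0 := by linarith [hnormw ▸ hwle]
    have : ‖u‖ = 0 := by nlinarith [norm_nonneg u, sq_nonneg ‖u‖]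
    exact norm_eq_zero.mp this
  have : w j0 = starRingEnd ℂ c := by
    rw [hwsplit, hu0]
    simp [he]
  rw [hwap j0] at this
  exact (starRingEnd ℂ).injective this
end

section
/- Let A ∈ M_n(ℂ) with ‖A‖₂ = σ and suppose every row sum of A has absolute value σ, i.e., |∑_j A_{ij}| = σ for all i. Then A = σ·W·D where W = diag(e^{iθ₁},…,e^{iθ_n}) is a diagonal unitary matrix (with ∑_j A_{ij} = σe^{iθ_i}) and D is a matrix with all row sums and column sums equal to 1 satisfying ‖D‖₂ = 1. -/
open ContinuousLinearMap in
theorem key_adjoint {n : ℕ} (T : EuclideanSpace ℂ (Fin n) →L[ℂ] EuclideanSpace ℂ (Fin n))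
    (σ : ℝ) (hσ : ‖T‖ = σ) (u : EuclideanSpace ℂ (Fin n)) (hu : ‖T u‖ = σ * ‖u‖) :
    ContinuousLinearMap.adjoint T (T u) = ((σ : ℂ)^2) • u := by
  have hσ0 : 0 ≤ σ := hσ ▸ norm_nonneg T
  have hns : ‖ContinuousLinearMap.adjoint T (T u) - ((σ:ℂ)^2) • u‖ ^ 2 ≤ 0 := by
    rw [@norm_sub_sq ℂ]
    have h1 : ‖ContinuousLinearMap.adjoint T (T u)‖ ≤ σ^2 * ‖u‖ := by
      calc ‖ContinuousLinearMap.adjoint T (T u)‖ ≤ ‖ContinuousLinearMap.adjoint T‖ * ‖T u‖ :=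
            le_opNorm _ _
        _ = σ * (σ * ‖u‖) := by
            rw [LinearIsometryEquiv.norm_map, hσ, hu]
        _ = σ^2 * ‖u‖ := by ring
    have h2 : RCLike.re (inner (𝕜 := ℂ) (ContinuousLinearMap.adjoint T (T u)) (((σ:ℂ)^2) • u))
        = σ^2 * ‖T u‖^2 := by
      rw [inner_smul_right, adjoint_inner_left, inner_self_eq_norm_sq_to_K]
      simp [← Complex.ofReal_pow, ← Complex.ofReal_mul]
    rw [h2, hu]
    have h3 : ‖ContinuousLinearMap.adjoint T (T u)‖^2 ≤ (σ^2 * ‖u‖)^2 := by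
      apply sq_le_sq' _ h1
      nlinarith [norm_nonneg (ContinuousLinearMap.adjoint T (T u)), mul_nonneg (mul_nonneg hσ0 hσ0) (norm_nonneg u)]
    have h4 : ‖((σ:ℂ)^2) • u‖^2 = (σ^2 * ‖u‖)^2 := by
      rw [norm_smul]
      simp [abs_of_nonneg hσ0]
    nlinarith [h3, h4]
  have := sq_nonneg ‖ContinuousLinearMap.adjoint T (T u) - ((σ:ℂ)^2) • u‖
  have h0 : ‖ContinuousLinearMap.adjoint T (T u) - ((σ:ℂ)^2) • u‖ = 0 := by nlinarith
  rw [norm_eq_zero, sub_eq_zero] at h0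
  exact h0

set_option maxHeartbeats 1000000 in
set_option synthInstance.maxHeartbeats 400000 in
theorem decomposition_of_unimodular_row_sums {n : ℕ} (hn : 0 < n)
    (A : Matrix (Fin n) (Fin n) ℂ) (σ : ℝ) (hσpos : 0 < σ) (hσ : specNorm A = σ)
    (hrow : ∀ i, ‖∑ j, A i j‖ = σ) :
    ∃ (θ : Fin n → ℝ) (D : Matrix (Fin n) (Fin n) ℂ),
      (∀ i, ∑ j, A i j = σ * Complex.exp (θ i * Complex.I)) ∧
      (∀ i, ∑ j, D i j = 1) ∧ (∀ j, ∑ i, D i j = 1) ∧ specNorm D = 1 ∧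
      A = (σ : ℂ) • ((Matrix.diagonal fun i => Complex.exp (θ i * Complex.I)) * D) := by
  classical
  set r : Fin n → ℂ := fun i => ∑ j, A i j with hrdef
  set θ : Fin n → ℝ := fun i => (r i).arg with hθdef
  have hre : ∀ i, r i = σ * Complex.exp (θ i * Complex.I) := by
    intro i
    conv_lhs => rw [← Complex.norm_mul_exp_arg_mul_I (r i)]
    rw [hrow i]
  set T := Matrix.toEuclideanCLM (𝕜 := ℂ) A with hT
  set u : EuclideanSpace ℂ (Fin n) := (WithLp.equiv 2 (Fin n → ℂ)).symm (fun _ => 1) with hudef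
  have hTu : T u = (WithLp.equiv 2 (Fin n → ℂ)).symm (A.mulVec fun _ => 1) := by
    rw [hudef]; rfl
  have hmv : ∀ i, A.mulVec (fun _ => 1) i = r i := by
    intro i; simp [Matrix.mulVec, dotProduct, hrdef]
  have hunorm : ‖u‖ = Real.sqrt n := by
    rw [EuclideanSpace.norm_eq]
    simp [hudef]
  have hTunorm : ‖T u‖ = σ * ‖u‖ := by
    rw [hTu, hunorm, EuclideanSpace.norm_eq]
    have : ∀ i : Fin n, ‖(WithLp.equiv 2 (Fin n → ℂ)).symm (A.mulVec fun _ => 1) i‖ ^ 2 = σ ^ 2 := by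
      intro i
      rw [show (WithLp.equiv 2 (Fin n → ℂ)).symm (A.mulVec fun _ => 1) i = A.mulVec (fun _ => 1) i from rfl, hmv i]
      rw [hrow i]
    rw [Finset.sum_congr rfl fun i _ => this i]
    rw [Finset.sum_const]
    rw [show (Finset.univ.card (α := Fin n)) • σ^2 = (Real.sqrt n * σ)^2 by
      rw [mul_pow, Real.sq_sqrt (by positivity)]; simp [smul_eq_mul]]
    rw [Real.sqrt_sq (by positivity)]
    ring
  have hkey := key_adjoint T σ hσ u hTunorm
  have hσC : (σ:ℂ) ≠ 0 := by exact_mod_cast hσpos.ne'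
  have hadj : ContinuousLinearMap.adjoint T = Matrix.toEuclideanCLM (𝕜 := ℂ) A.conjTranspose := by
    have h := map_star (Matrix.toEuclideanCLM (n := Fin n) (𝕜 := ℂ)) A
    rw [Matrix.star_eq_conjTranspose, ContinuousLinearMap.star_eq_adjoint] at h
    exact h.symm
  have hmat : ∀ j, ∑ i, (starRingEnd ℂ) (A i j) * r i = (σ:ℂ)^2 := by
    intro j
    have h := congrFun (congrArg (WithLp.equiv 2 (Fin n → ℂ)) hkey) j
    rw [hadj, hTu] at h
    change (A.conjTranspose.mulVec (A.mulVec fun _ => 1)) j = _ at h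
    rw [funext hmv] at h
    simpa [Matrix.mulVec, dotProduct, Matrix.conjTranspose_apply, hudef] using h
  have hstar_r : ∀ i, (starRingEnd ℂ) (r i) = σ * Complex.exp (-(θ i : ℂ) * Complex.I) := by
    intro i
    rw [hre i, map_mul, Complex.conj_ofReal, ← Complex.exp_conj]
    congr 1
    simp [Complex.conj_I]
  have hcol : ∀ j, ∑ i, Complex.exp (-(θ i : ℂ) * Complex.I) * A i j = (σ:ℂ) := by
    intro j
    have h := congrArg (starRingEnd ℂ) (hmat j)
    simp only [map_sum, map_mul, Complex.conj_conj, map_pow, Complex.conj_ofReal] at h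
    have h2 : (σ:ℂ) * ∑ i, Complex.exp (-(θ i : ℂ) * Complex.I) * A i j = (σ:ℂ) * σ := by
      rw [Finset.mul_sum]
      calc ∑ i, (σ:ℂ) * (Complex.exp (-(θ i : ℂ) * Complex.I) * A i j)
          = ∑ i, A i j * ((starRingEnd ℂ) (r i)) := by
            apply Finset.sum_congr rfl
            intro i _
            rw [hstar_r i]; ring
        _ = (σ:ℂ) * σ := by rw [h]; ring
    exact mul_left_cancel₀ hσC h2
  set W : Matrix (Fin n) (Fin n) ℂ :=
    Matrix.diagonal (fun i => Complex.exp ((θ i:ℂ) * Complex.I)) with hWdef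
  set Wneg : Matrix (Fin n) (Fin n) ℂ :=
    Matrix.diagonal (fun i => Complex.exp (-(θ i:ℂ) * Complex.I)) with hWnegdef
  set D : Matrix (Fin n) (Fin n) ℂ := ((σ:ℂ)⁻¹) • (Wneg * A) with hDdef
  have hDapply : ∀ i j, D i j = (σ:ℂ)⁻¹ * (Complex.exp (-(θ i:ℂ) * Complex.I) * A i j) := by
    intro i j
    rw [hDdef, Matrix.smul_apply, smul_eq_mul]
    congr 1
    rw [hWnegdef, Matrix.diagonal_mul]
  have hexp : ∀ i, Complex.exp (-(θ i:ℂ) * Complex.I) * Complex.exp ((θ i:ℂ) * Complex.I) = 1 := by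
    intro i
    rw [← Complex.exp_add, show -(θ i:ℂ) * Complex.I + (θ i:ℂ) * Complex.I = 0 by ring,
      Complex.exp_zero]
  have hWW : W * Wneg = 1 := by
    rw [hWdef, hWnegdef, Matrix.diagonal_mul_diagonal]
    have he : (fun i => Complex.exp ((θ i:ℂ) * Complex.I) * Complex.exp (-(θ i:ℂ) * Complex.I))
        = fun _ => (1:ℂ) := by
      funext i; rw [mul_comm]; exact hexp i
    rw [he, Matrix.diagonal_one]
  have hWiso : ∀ x : EuclideanSpace ℂ (Fin n), ‖Matrix.toEuclideanCLM (𝕜:=ℂ) Wneg x‖ = ‖x‖ := by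
    intro x
    rw [EuclideanSpace.norm_eq, EuclideanSpace.norm_eq]
    congr 1
    apply Finset.sum_congr rfl
    intro i _
    have h := congrFun (Matrix.ofLp_toEuclideanCLM (𝕜:=ℂ) Wneg x) i
    rw [hWnegdef, Matrix.mulVec_diagonal] at h
    have h' : (Matrix.toEuclideanCLM (𝕜:=ℂ) Wneg x) i
        = Complex.exp (-(θ i:ℂ) * Complex.I) * x i := h
    rw [h', norm_mul]
    have : ‖Complex.exp (-(θ i:ℂ) * Complex.I)‖ = 1 := by
      rw [Complex.norm_exp]
      simp
    rw [this, one_mul]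
  have hDCLM : Matrix.toEuclideanCLM (𝕜:=ℂ) D
      = ((σ:ℂ)⁻¹) • (Matrix.toEuclideanCLM (𝕜:=ℂ) Wneg * T) := by
    rw [hDdef, map_smul, map_mul, hT]
  have hcomp : ‖Matrix.toEuclideanCLM (𝕜:=ℂ) Wneg * T‖ = ‖T‖ := by
    apply le_antisymm
    · apply ContinuousLinearMap.opNorm_le_bound _ (norm_nonneg T)
      intro x
      rw [ContinuousLinearMap.mul_apply, hWiso]
      exact T.le_opNorm x
    · apply ContinuousLinearMap.opNorm_le_bound _ (norm_nonneg _)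
      intro x
      rw [← hWiso (T x), ← ContinuousLinearMap.mul_apply]
      exact (Matrix.toEuclideanCLM (𝕜:=ℂ) Wneg * T).le_opNorm x
  refine ⟨θ, D, fun i => hre i, ?_, ?_, ?_, ?_⟩
  · intro i
    have : ∑ j, D i j = (σ:ℂ)⁻¹ * (Complex.exp (-(θ i:ℂ) * Complex.I) * r i) := by
      rw [hrdef]
      simp only [hDapply, ← Finset.mul_sum]
    rw [this, hre i, show (σ:ℂ)⁻¹ * (Complex.exp (-(θ i:ℂ) * Complex.I)
      * ((σ:ℂ) * Complex.exp ((θ i:ℂ) * Complex.I)))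
      = ((σ:ℂ)⁻¹ * σ) * (Complex.exp (-(θ i:ℂ) * Complex.I)
        * Complex.exp ((θ i:ℂ) * Complex.I)) by ring, hexp i,
      inv_mul_cancel₀ hσC, mul_one]
  · intro j
    have : ∑ i, D i j = (σ:ℂ)⁻¹ * ∑ i, Complex.exp (-(θ i:ℂ) * Complex.I) * A i j := by
      simp only [hDapply, ← Finset.mul_sum]
    rw [this, hcol j, inv_mul_cancel₀ hσC]
  · show ‖Matrix.toEuclideanCLM (𝕜:=ℂ) D‖ = 1
    rw [hDCLM, norm_smul ((σ:ℂ)⁻¹) (Matrix.toEuclideanCLM (𝕜:=ℂ) Wneg * T), hcomp, show ‖T‖ = σ from hσ]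
    simp [abs_of_pos hσpos]
    exact inv_mul_cancel₀ hσpos.ne'
  · rw [hDdef, mul_smul_comm, ← mul_assoc]
    rw [show (Matrix.diagonal fun i => Complex.exp ((θ i:ℂ) * Complex.I)) = W from rfl, hWW,
      one_mul, smul_smul, mul_inv_cancel₀ hσC, one_smul]
end

section
/- Let A ∈ M_n(ℂ) with ‖A‖₂ = σ and suppose every column sum of A has absolute value σ. Then A = σ·D·W where W is a diagonal unitary matrix with diagonal entries the unit-modulus phases of the column sums, and D is a 1-generalized doubly stochastic matrix with ‖D‖₂ = 1. -/
open scoped InnerProductSpace in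
open Matrix in
set_option synthInstance.maxHeartbeats 1000000 in
set_option maxHeartbeats 2000000 in
theorem decomposition_of_unimodular_col_sums {n : ℕ} (hn : 0 < n)
    (A : Matrix (Fin n) (Fin n) ℂ) (σ : ℝ) (hσpos : 0 < σ) (hσ : specNorm A = σ)
    (hcol : ∀ j, ‖∑ i, A i j‖ = σ) :
    ∃ (γ : Fin n → ℝ) (D : Matrix (Fin n) (Fin n) ℂ),
      (∀ j, ∑ i, A i j = σ * Complex.exp (γ j * Complex.I)) ∧
      (∀ i, ∑ j, D i j = 1) ∧ (∀ j, ∑ i, D i j = 1) ∧ specNorm D = 1 ∧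
      A = (σ : ℂ) • (D * Matrix.diagonal fun j => Complex.exp (γ j * Complex.I)) := by
  set γ : Fin n → ℝ := fun j => (∑ i, A i j).arg with hγ
  have hsum : ∀ j, ∑ i, A i j = σ * Complex.exp (γ j * Complex.I) := by
    intro j
    rw [← hcol j]
    exact (Complex.norm_mul_exp_arg_mul_I _).symm
  set U : Matrix (Fin n) (Fin n) ℂ := Matrix.diagonal fun j => Complex.exp (-(γ j) * Complex.I)
    with hU
  set D : Matrix (Fin n) (Fin n) ℂ := (σ : ℂ)⁻¹ • (A * U) with hD
  have hσne : (σ : ℂ) ≠ 0 := by exact_mod_cast hσpos.ne'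
  have hexp1 : ∀ j, Complex.exp (-(γ j : ℂ) * Complex.I) * Complex.exp ((γ j : ℂ) * Complex.I)
      = 1 := by
    intro j; rw [← Complex.exp_add]; ring_nf; exact Complex.exp_zero
  have hDij : ∀ i j, D i j = (σ : ℂ)⁻¹ * (A i j * Complex.exp (-(γ j) * Complex.I)) := by
    intro i j
    simp [hD, hU, Matrix.mul_diagonal]
  -- column sums of D are 1
  have hcolD : ∀ j, ∑ i, D i j = 1 := by
    intro j
    simp only [hDij, ← Finset.mul_sum, ← Finset.sum_mul]
    rw [hsum j]
    calc (σ:ℂ)⁻¹ * (↑σ * Complex.exp (↑(γ j) * Complex.I) * Complex.exp (-↑(γ j) * Complex.I))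
        = ((σ:ℂ)⁻¹ * σ) *
          (Complex.exp (-(γ j : ℂ) * Complex.I) * Complex.exp ((γ j : ℂ) * Complex.I)) := by ring
      _ = 1 := by rw [hexp1 j, inv_mul_cancel₀ hσne, mul_one]
  -- the diagonal unitary
  have hUmem : (Matrix.toEuclideanCLM (𝕜 := ℂ) U)
      ∈ unitary (EuclideanSpace ℂ (Fin n) →L[ℂ] EuclideanSpace ℂ (Fin n)) := by
    have h : U ∈ unitary (Matrix (Fin n) (Fin n) ℂ) := by
      constructor <;>
      · simp only [hU, star_eq_conjTranspose, diagonal_conjTranspose, diagonal_mul_diagonal]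
        rw [← diagonal_one]
        congr 1
        funext j
        simp [Pi.star_apply, ← Complex.exp_conj, ← Complex.exp_add]
    exact (Unitary.mem_iff).2
      ⟨by rw [← map_star, ← _root_.map_mul, h.1, _root_.map_one],
       by rw [← map_star, ← _root_.map_mul, h.2, _root_.map_one]⟩
  -- spectral norm of D is 1
  have hnormD : specNorm D = 1 := by
    unfold specNorm
    rw [hD, _root_.map_smul, _root_.map_mul,
      norm_smul ((σ:ℂ)⁻¹) (Matrix.toEuclideanCLM (𝕜 := ℂ) A * Matrix.toEuclideanCLM (𝕜 := ℂ) U)]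
    rw [CStarRing.norm_mul_mem_unitary _ hUmem]
    have h1 : ‖Matrix.toEuclideanCLM (𝕜 := ℂ) A‖ = σ := hσ
    rw [h1]
    simp only [norm_inv, Complex.norm_real, Real.norm_eq_abs, abs_of_pos hσpos]
    exact inv_mul_cancel₀ hσpos.ne'
  -- row sums of D are 1, via the operator norm argument
  have hrowD : ∀ i, ∑ j, D i j = 1 := by
    set T := Matrix.toEuclideanCLM (𝕜 := ℂ) D with hT
    set e : EuclideanSpace ℂ (Fin n) := (WithLp.equiv _ _).symm (fun _ => 1) with he
    have hadj : ContinuousLinearMap.adjoint T e = e := by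
      rw [← ContinuousLinearMap.star_eq_adjoint, hT, ← map_star]
      have hmv : (star D).mulVec (fun _ => (1:ℂ)) = fun _ => 1 := by
        funext j
        simp only [Matrix.mulVec, dotProduct, star_eq_conjTranspose,
          Matrix.conjTranspose_apply, mul_one]
        calc ∑ i, star (D i j) = star (∑ i, D i j) := (star_sum _ _).symm
          _ = 1 := by rw [hcolD j]; exact star_one ℂ
      calc Matrix.toEuclideanCLM (𝕜 := ℂ) (star D) ((WithLp.equiv _ _).symm (fun _ => 1))
          = (WithLp.equiv _ _).symm (Matrix.toLin' (star D) (fun _ => 1)) := by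
            rfl
        _ = e := by rw [Matrix.toLin'_apply, hmv]
    have hinner : ⟪e, T e⟫_ℂ = ⟪e, e⟫_ℂ := by
      rw [← ContinuousLinearMap.adjoint_inner_left T e e, hadj]
    have hTnorm : ‖T‖ = 1 := hnormD
    have hTe : T e = e := by
      have hns : ‖T e - e‖ ^ 2 = ‖T e‖ ^ 2 - 2 * RCLike.re (⟪T e, e⟫_ℂ) + ‖e‖ ^ 2 :=
        @norm_sub_sq ℂ _ _ _ _ (T e) e
      have hre : RCLike.re (⟪T e, e⟫_ℂ) = ‖e‖ ^ 2 := by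
        have h5 : ⟪T e, e⟫_ℂ = ⟪e, e⟫_ℂ := by
          rw [← inner_conj_symm, hinner, inner_self_conj]
        rw [h5]
        exact inner_self_eq_norm_sq e
      have hTle : ‖T e‖ ≤ ‖e‖ := by
        calc ‖T e‖ ≤ ‖T‖ * ‖e‖ := T.le_opNorm e
          _ = ‖e‖ := by rw [hTnorm, one_mul]
      have h0 : ‖T e - e‖ = 0 := by nlinarith [norm_nonneg (T e - e), norm_nonneg (T e)]
      exact sub_eq_zero.mp (norm_eq_zero.mp h0)
    intro i
    have hmv : D.mulVec (fun _ => (1:ℂ)) = fun _ => 1 := by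
      have h1 : T ((WithLp.equiv _ _).symm (fun _ => 1)) =
          (WithLp.equiv _ _).symm (Matrix.toLin' D (fun _ => 1)) := by
        rw [hT]; rfl
      rw [← Matrix.toLin'_apply]
      have h2 := hTe
      rw [he, h1] at h2
      exact congrArg (WithLp.equiv 2 _) h2
    have h3 := congrFun hmv i
    simpa [Matrix.mulVec, dotProduct] using h3
  refine ⟨γ, D, hsum, hrowD, hcolD, hnormD, ?_⟩
  rw [hD, Matrix.smul_mul, smul_smul, mul_inv_cancel₀ hσne, one_smul]
  rw [Matrix.mul_assoc, hU, Matrix.diagonal_mul_diagonal]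
  have h4 : (fun j => Complex.exp (-(γ j) * Complex.I) * Complex.exp (γ j * Complex.I)) =
      fun _ => (1:ℂ) := by
    funext j; exact hexp1 j
  rw [h4, Matrix.diagonal_one, Matrix.mul_one]
end
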